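/- arXiv:2506.05624 — 2 statements merged into one kernel-verified Lean document; each statement's English description precedes it below -/
import Mathlib

section
/- Let $\mathcal{H}$ be a real Hilbert space, let $y_1,\dots,y_n \in \mathcal{H}$ satisfy $\|y_k\| \le K$ for all $k$, and let $\mathcal{C} = \{\sum_{k=1}^n \alpha_k y_k : \sum_{k=1}^n |\alpha_k| \le 1\}$ be the balanced convex hull. Then for every $\epsilon > 0$, the $\epsilon$-covering number of $\mathcal{C}$ in the norm of $\mathcal{H}$ satisfies $\log \mathcal{N}(\mathcal{C}, \|\cdot\|, \epsilon) \le C K^2 \frac{\log(n+1)}{\epsilon^2}$ for an absolute constant $C$. -/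
open RealInnerProductSpace


open Finset


lemma sum_pi_succ {M : Type*} [AddCommMonoid M] {ι : Type} [Fintype ι] (m : ℕ)
    (f : (Fin (m+1) → ι) → M) :
    ∑ ω : Fin (m+1) → ι, f ω = ∑ a : ι, ∑ ω : Fin m → ι, f (Fin.cons a ω) := by
  rw [← (Fin.consEquiv (fun _ => ι)).sum_comp f, Fintype.sum_prod_type]
  rfl

lemma sum_pi_prod_eq_one {ι : Type} [Fintype ι] (p : ι → ℝ) (hs : ∑ i, p i = 1) (m : ℕ) :
    ∑ ω : Fin m → ι, ∏ i, p (ω i) = 1 := by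
  induction m with
  | zero => simp
  | succ m ih =>
      rw [sum_pi_succ]
      have h : ∀ (a : ι) (ω : Fin m → ι), ∏ i, p ((Fin.cons a ω : Fin (m+1) → ι) i)
          = p a * ∏ i, p (ω i) := by
        intro a ω; rw [Fin.prod_univ_succ]; simp
      simp only [h, ← Finset.mul_sum]
      rw [← Finset.sum_mul, hs, ih, one_mul]

lemma maurey_var {H : Type} [NormedAddCommGroup H] [InnerProductSpace ℝ H]
    {ι : Type} [Fintype ι] (p : ι → ℝ) (hs : ∑ i, p i = 1)
    (u : ι → H) (hmean : ∑ i, p i • u i = 0) (m : ℕ) :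
    ∑ ω : Fin m → ι, (∏ i, p (ω i)) * ‖∑ i, u (ω i)‖^2
      = m * ∑ i, p i * ‖u i‖^2 := by
  induction m with
  | zero => simp
  | succ m ih =>
      rw [sum_pi_succ]
      have hW := sum_pi_prod_eq_one p hs m
      set T : H := ∑ ω : Fin m → ι, (∏ i, p (ω i)) • (∑ i, u (ω i)) with hT
      have inner_a : ∀ a : ι, ∑ ω : Fin m → ι, (∏ i, p (ω i)) * ‖u a + ∑ i, u (ω i)‖^2
          = ‖u a‖^2 + 2*(⟪u a, T⟫) + (m : ℝ) * ∑ i, p i * ‖u i‖^2 := by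
        intro a
        have h1 : ∀ ω : Fin m → ι, (∏ i, p (ω i)) * ‖u a + ∑ i, u (ω i)‖^2
            = (∏ i, p (ω i)) * ‖u a‖^2 + 2*((∏ i, p (ω i)) * ⟪u a, ∑ i, u (ω i)⟫)
              + (∏ i, p (ω i)) * ‖∑ i, u (ω i)‖^2 := by
          intro ω; rw [norm_add_sq_real]; ring
        rw [Finset.sum_congr rfl (fun ω _ => h1 ω), Finset.sum_add_distrib,
          Finset.sum_add_distrib, ← Finset.sum_mul, hW, one_mul, ih, ← Finset.mul_sum]
        have hTa : (⟪u a, T⟫ : ℝ) = ∑ ω : Fin m → ι, (∏ i, p (ω i)) * ⟪u a, ∑ i, u (ω i)⟫ := by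
          rw [hT, inner_sum]
          exact Finset.sum_congr rfl fun ω _ => real_inner_smul_right _ _ _
        rw [hTa]
      have hcons : ∀ (a : ι) (ω : Fin m → ι),
          (∏ i, p ((Fin.cons a ω : Fin (m+1) → ι) i))
            * ‖∑ i, u ((Fin.cons a ω : Fin (m+1) → ι) i)‖^2
          = p a * ((∏ i, p (ω i)) * ‖u a + ∑ i, u (ω i)‖^2) := by
        intro a ω
        rw [Fin.prod_univ_succ, Fin.sum_univ_succ]
        simp [mul_assoc]
      simp only [hcons, ← Finset.mul_sum]
      have h2 : ∀ a : ι, p a * (∑ ω : Fin m → ι, (∏ i, p (ω i)) * ‖u a + ∑ i, u (ω i)‖^2)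
          = p a * ‖u a‖^2 + 2*(p a * ⟪u a, T⟫) + p a * (m * ∑ i, p i * ‖u i‖^2) := by
        intro a; rw [inner_a a]; ring
      rw [Finset.sum_congr rfl (fun a _ => h2 a), Finset.sum_add_distrib,
        Finset.sum_add_distrib, ← Finset.mul_sum, ← Finset.sum_mul, hs, one_mul]
      have h3 : ∑ a : ι, p a * ⟪u a, T⟫ = 0 := by
        have : ∑ a : ι, p a * ⟪u a, T⟫ = ⟪∑ a : ι, p a • u a, T⟫ := by
          rw [sum_inner]
          exact Finset.sum_congr rfl (fun a _ => (real_inner_smul_left _ _ _).symm)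
        rw [this, hmean, inner_zero_left]
      rw [h3, mul_zero, add_zero]
      push_cast
      ring

lemma exists_le_of_weighted {Ω : Type} [Fintype Ω] (w f : Ω → ℝ) (hw : ∀ i, 0 ≤ w i)
    (hs : ∑ i, w i = 1) {B : ℝ} (hB : ∑ i, w i * f i ≤ B) : ∃ ω, f ω ≤ B := by
  by_contra hcon
  push_neg at hcon
  obtain ⟨ω₀, hω₀⟩ : ∃ ω₀, w ω₀ ≠ 0 := by
    by_contra hz
    push_neg at hz
    simp [hz] at hs
  have h1 : (B : ℝ) = ∑ i : Ω, w i * B := by rw [← Finset.sum_mul, hs, one_mul]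
  have h2 : ∑ i : Ω, w i * B < ∑ i : Ω, w i * f i := by
    apply Finset.sum_lt_sum (fun i _ => mul_le_mul_of_nonneg_left (hcon i).le (hw i))
    exact ⟨ω₀, Finset.mem_univ _,
      mul_lt_mul_of_pos_left (hcon ω₀) (lt_of_le_of_ne (hw ω₀) (Ne.symm hω₀))⟩
  linarith

lemma maurey_exists {H : Type} [NormedAddCommGroup H] [InnerProductSpace ℝ H]
    {ι : Type} [Fintype ι] (p : ι → ℝ) (v : ι → H) (hp : ∀ i, 0 ≤ p i)
    (hs : ∑ i, p i = 1) {K : ℝ} (hK : 0 ≤ K) (hv : ∀ i, ‖v i‖ ≤ K)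
    (m : ℕ) (hm : 0 < m) :
    ∃ ω : Fin m → ι, ‖((m:ℝ)⁻¹ • ∑ i, v (ω i)) - ∑ j, p j • v j‖^2 ≤ 4*K^2 / m := by
  set x : H := ∑ j, p j • v j with hxdef
  have hx : ‖x‖ ≤ K := by
    calc ‖x‖ ≤ ∑ j, ‖p j • v j‖ := norm_sum_le _ _
    _ ≤ ∑ j, p j * K := by
        refine Finset.sum_le_sum fun j _ => ?_
        rw [norm_smul, Real.norm_eq_abs, abs_of_nonneg (hp j)]
        exact mul_le_mul_of_nonneg_left (hv j) (hp j)
    _ = K := by rw [← Finset.sum_mul, hs, one_mul]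
  set u : ι → H := fun i => v i - x with hudef
  have hmean : ∑ i, p i • u i = 0 := by
    simp only [hudef, smul_sub, Finset.sum_sub_distrib, ← Finset.sum_smul, hs, one_smul,
      sub_self]
    exact sub_eq_zero.mpr hxdef.symm
  have hub : ∀ i, ‖u i‖^2 ≤ (2*K)^2 := by
    intro i
    have h1 : ‖u i‖ ≤ 2*K := by
      calc ‖u i‖ ≤ ‖v i‖ + ‖x‖ := norm_sub_le _ _
      _ ≤ K + K := add_le_add (hv i) hx
      _ = 2*K := by ring
    exact pow_le_pow_left₀ (norm_nonneg _) h1 2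
  have hvar := maurey_var p hs u hmean m
  have hE : ∑ i, p i * ‖u i‖^2 ≤ 4*K^2 := by
    calc ∑ i, p i * ‖u i‖^2 ≤ ∑ i, p i * (2*K)^2 :=
      Finset.sum_le_sum fun i _ => mul_le_mul_of_nonneg_left (hub i) (hp i)
    _ = 4*K^2 := by rw [← Finset.sum_mul, hs]; ring
  have hWnn : ∀ ω : Fin m → ι, 0 ≤ ∏ i, p (ω i) :=
    fun ω => Finset.prod_nonneg fun i _ => hp (ω i)
  have hbound : ∑ ω : Fin m → ι, (∏ i, p (ω i)) * ‖∑ i, u (ω i)‖^2 ≤ m * (4*K^2) := by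
    rw [hvar]
    exact mul_le_mul_of_nonneg_left hE (Nat.cast_nonneg m)
  obtain ⟨ω, hω⟩ := exists_le_of_weighted _ _ hWnn (sum_pi_prod_eq_one p hs m) hbound
  refine ⟨ω, ?_⟩
  have hmne : (m:ℝ) ≠ 0 := Nat.cast_ne_zero.mpr hm.ne'
  have hrw : ((m:ℝ)⁻¹ • ∑ i, v (ω i)) - x = (m:ℝ)⁻¹ • ∑ i, u (ω i) := by
    simp only [hudef, Finset.sum_sub_distrib, Finset.sum_const, Finset.card_univ,
      Fintype.card_fin, smul_sub, ← Nat.cast_smul_eq_nsmul ℝ, smul_smul,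
      inv_mul_cancel₀ hmne, one_smul]
  rw [hrw, norm_smul, Real.norm_eq_abs, abs_of_nonneg (by positivity), mul_pow]
  calc ((m:ℝ)⁻¹)^2 * ‖∑ i, u (ω i)‖^2 ≤ ((m:ℝ)⁻¹)^2 * (m * (4*K^2)) := by
        apply mul_le_mul_of_nonneg_left hω (by positivity)
  _ = 4*K^2 / m := by field_simp


/-- Maurey's empirical method: covering number bound for the balanced convex
hull of `n` vectors of norm at most `K` in a real Hilbert space. -/
theorem stmt_0 :
    ∃ C : ℝ, 0 < C ∧
      ∀ (H : Type) [NormedAddCommGroup H] [InnerProductSpace ℝ H] [CompleteSpace H]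
        (n : ℕ) (y : Fin n → H) (K : ℝ),
        (∀ k, ‖y k‖ ≤ K) →
        ∀ ε : ℝ, 0 < ε →
          ∃ F : Finset H,
            {x : H | ∃ α : Fin n → ℝ, (∑ k, |α k|) ≤ 1 ∧ x = ∑ k, α k • y k}
              ⊆ ⋃ c ∈ F, Metric.ball c ε ∧
            Real.log F.card ≤ C * K ^ 2 * Real.log (n + 1) / ε ^ 2 := by
  classical
  refine ⟨16, by norm_num, ?_⟩
  intro H _ _ _ n y K hK ε hε
  rcases Nat.eq_zero_or_pos n with hn0 | hn
  · subst hn0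
    refine ⟨{0}, ?_, ?_⟩
    · intro x hx
      obtain ⟨α, -, hxe⟩ := hx
      have hx0 : x = 0 := by simpa using hxe
      refine Set.mem_iUnion₂.mpr ⟨0, Finset.mem_singleton_self 0, ?_⟩
      rw [Metric.mem_ball, hx0, dist_self]
      exact hε
    · simp
  have hK0 : 0 ≤ K := le_trans (norm_nonneg _) (hK ⟨0, hn⟩)
  have hln : 0 ≤ Real.log ((n:ℝ)+1) := Real.log_nonneg (by push_cast; linarith)
  by_cases hcase : ε^2 ≤ 4*K^2
  · -- Maurey case
    set m : ℕ := ⌊4*K^2/ε^2⌋₊ + 1 with hmdef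
    have hm : 0 < m := Nat.succ_pos _
    have hmlb : 4*K^2/ε^2 < (m:ℝ) := by
      rw [hmdef]
      push_cast
      exact Nat.lt_floor_add_one _
    have hmub : (m:ℝ) ≤ 8*K^2/ε^2 := by
      have h1 : (⌊4*K^2/ε^2⌋₊ : ℝ) ≤ 4*K^2/ε^2 := Nat.floor_le (by positivity)
      have h2 : (1:ℝ) ≤ 4*K^2/ε^2 := by
        rw [le_div_iff₀ (by positivity)]
        linarith
      rw [hmdef]
      push_cast
      have : (8:ℝ)*K^2/ε^2 = 4*K^2/ε^2 + 4*K^2/ε^2 := by ring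
      linarith
    set h : Option (Fin n × Bool) → H :=
      fun o => Option.elim o 0 (fun kb => if kb.2 then y kb.1 else -y kb.1) with hhdef
    set g : (Fin m → Option (Fin n × Bool)) → H := fun ω => (m:ℝ)⁻¹ • ∑ i, h (ω i) with hgdef
    have hnorm : ∀ i, ‖h i‖ ≤ K := by
      rintro (_ | ⟨k, b⟩)
      · simpa [hhdef] using hK0
      · rcases b <;> simp [hhdef] <;> exact hK k
    refine ⟨Finset.image g Finset.univ, ?_, ?_⟩
    · intro x hx
      obtain ⟨α, hα, hxe⟩ := hx
      set p : Option (Fin n × Bool) → ℝ :=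
        fun o => Option.elim o (1 - ∑ k, |α k|)
          (fun kb => if kb.2 then max (α kb.1) 0 else max (-α kb.1) 0) with hpdef
      have hp : ∀ i, 0 ≤ p i := by
        rintro (_ | ⟨k, b⟩)
        · simpa [hpdef] using hα
        · rcases b <;> simp [hpdef, le_max_right]
      have hsum : ∑ i, p i = 1 := by
        have hsome : ∑ kb : Fin n × Bool, p (some kb) = ∑ k, |α k| := by
          rw [Fintype.sum_prod_type]
          refine Finset.sum_congr rfl fun k _ => ?_
          rw [Fintype.sum_bool]
          simp only [hpdef, Option.elim]
          norm_num
        rw [Fintype.sum_option, hsome]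
        simp [hpdef]
      have hmeanx : ∑ i, p i • h i = x := by
        have hsome : ∑ kb : Fin n × Bool, p (some kb) • h (some kb) = ∑ k, α k • y k := by
          rw [Fintype.sum_prod_type]
          refine Finset.sum_congr rfl fun k _ => ?_
          rw [Fintype.sum_bool]
          simp only [hpdef, hhdef, Option.elim]
          norm_num
          rw [← neg_smul, ← add_smul]
          congr 1
          rcases le_total 0 (α k) with h' | h'
          · rw [max_eq_left h', max_eq_right (by linarith), neg_zero, add_zero]
          · rw [max_eq_right h', max_eq_left (by linarith), zero_add, neg_neg]
        rw [Fintype.sum_option, hsome, hxe]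
        simp [hhdef]
      obtain ⟨ω, hω⟩ := maurey_exists p h hp hsum hK0 hnorm m hm
      rw [hmeanx] at hω
      have hmpos : (0:ℝ) < m := Nat.cast_pos.mpr hm
      have hlt2 : ‖((m:ℝ)⁻¹ • ∑ i, h (ω i)) - x‖^2 < ε^2 := by
        refine lt_of_le_of_lt hω ?_
        rw [div_lt_iff₀ hmpos]
        have h4 : 4*K^2 < (m:ℝ)*ε^2 := by
          have := (div_lt_iff₀ (by positivity : (0:ℝ) < ε^2)).mp hmlb
          linarith
        linarith
      have hlt : ‖((m:ℝ)⁻¹ • ∑ i, h (ω i)) - x‖ < ε :=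
        lt_of_pow_lt_pow_left₀ 2 hε.le hlt2
      refine Set.mem_iUnion₂.mpr ⟨g ω, Finset.mem_image_of_mem g (Finset.mem_univ ω), ?_⟩
      rw [Metric.mem_ball, dist_eq_norm, norm_sub_rev]
      exact hlt
    · have hcard : (Finset.image g Finset.univ).card ≤ (2*n+1)^m := by
        refine le_trans Finset.card_image_le ?_
        rw [Finset.card_univ]
        apply le_of_eq
        simp [Fintype.card_option, Fintype.card_prod, Fintype.card_bool, mul_comm]
      have hpos : 0 < (Finset.image g Finset.univ).card :=
        Finset.card_pos.mpr ⟨g (fun _ => none), Finset.mem_image_of_mem _ (Finset.mem_univ _)⟩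
      have hlog1 : Real.log ((Finset.image g Finset.univ).card : ℝ)
          ≤ (m:ℝ) * Real.log (2*(n:ℝ)+1) := by
        have hle : ((Finset.image g Finset.univ).card : ℝ) ≤ ((2*(n:ℝ)+1))^m := by
          calc ((Finset.image g Finset.univ).card : ℝ) ≤ (((2*n+1)^m : ℕ) : ℝ) := by
                exact_mod_cast hcard
          _ = (2*(n:ℝ)+1)^m := by push_cast; ring
        calc Real.log ((Finset.image g Finset.univ).card : ℝ)
            ≤ Real.log ((2*(n:ℝ)+1)^m) :=
              Real.log_le_log (by exact_mod_cast hpos) hle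
        _ = (m:ℝ) * Real.log (2*(n:ℝ)+1) := by rw [Real.log_pow]
      have hlog2 : Real.log (2*(n:ℝ)+1) ≤ 2 * Real.log ((n:ℝ)+1) := by
        have hle : (2*(n:ℝ)+1) ≤ ((n:ℝ)+1)^2 := by nlinarith [Nat.cast_nonneg (α := ℝ) n]
        calc Real.log (2*(n:ℝ)+1) ≤ Real.log (((n:ℝ)+1)^2) :=
          Real.log_le_log (by positivity) hle
        _ = 2 * Real.log ((n:ℝ)+1) := by rw [Real.log_pow]; push_cast; ring
      have hmnn : (0:ℝ) ≤ (m:ℝ) := Nat.cast_nonneg m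
      calc Real.log ((Finset.image g Finset.univ).card : ℝ)
          ≤ (m:ℝ) * Real.log (2*(n:ℝ)+1) := hlog1
      _ ≤ (m:ℝ) * (2 * Real.log ((n:ℝ)+1)) := mul_le_mul_of_nonneg_left hlog2 hmnn
      _ ≤ (8*K^2/ε^2) * (2 * Real.log ((n:ℝ)+1)) := by
          apply mul_le_mul_of_nonneg_right hmub (by positivity)
      _ = 16 * K^2 * Real.log ((n:ℝ)+1) / ε^2 := by ring
  · -- big epsilon case : one ball suffices
    push_neg at hcase
    have hKε : K < ε := by nlinarith
    refine ⟨{0}, ?_, ?_⟩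
    · intro x hx
      obtain ⟨α, hα, hxe⟩ := hx
      have hxn : ‖x‖ ≤ K := by
        rw [hxe]
        calc ‖∑ k, α k • y k‖ ≤ ∑ k, ‖α k • y k‖ := norm_sum_le _ _
        _ ≤ ∑ k, |α k| * K := Finset.sum_le_sum fun k _ => by
            rw [norm_smul, Real.norm_eq_abs]
            exact mul_le_mul_of_nonneg_left (hK k) (abs_nonneg _)
        _ = (∑ k, |α k|) * K := by rw [Finset.sum_mul]
        _ ≤ 1 * K := mul_le_mul_of_nonneg_right hα hK0
        _ = K := one_mul K
      refine Set.mem_iUnion₂.mpr ⟨0, Finset.mem_singleton_self 0, ?_⟩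
      rw [Metric.mem_ball, dist_zero_right]
      exact lt_of_le_of_lt hxn hKε
    · have h0 : Real.log ((({0} : Finset H).card : ℕ) : ℝ) = 0 := by simp
      rw [h0]
      positivity
end

section
/- Let $Z$ be a real random variable with $|Z| \le 1$ almost surely, $\mathbb{E}Z = 0$, and $\mathbb{E}Z^2 \le \delta$. Let $Z_1,\dots,Z_n$ be i.i.d. copies of $Z$ and let $a = (a_1,\dots,a_n)$ be real numbers, not all zero. Then for all $t > 0$, $\mathbb{P}\left(\sum_{k=1}^n a_k Z_k \ge t\right) \le \exp\left(-\frac{t}{2\|a\|_\infty} \log \frac{t \|a\|_\infty}{\delta \|a\|_2^2}\right)$, provided $t\|a\|_\infty \ge \delta \|a\|_2^2$. -/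
set_option maxHeartbeats 1000000

open Real Set MeasureTheory ProbabilityTheory

lemma quad_le_exp {y : ℝ} (hy : 0 ≤ y) : 1 + y + y^2/2 ≤ Real.exp y := by
  have h := Real.sum_le_exp_of_nonneg hy 3
  simpa [Finset.sum_range_succ, Nat.factorial] using h

lemma exp_le_quad_of_nonpos {x : ℝ} (hx : x ≤ 0) : Real.exp x ≤ 1 + x + x^2/2 := by
  have hy : 0 ≤ -x := by linarith
  have h1 := quad_le_exp hy
  have h2 : Real.exp x * Real.exp (-x) = 1 := by rw [← Real.exp_add]; simp
  nlinarith [sq_nonneg x, sq_nonneg (x^2), Real.exp_pos (-x), Real.exp_pos x]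

lemma exp_sub_series (x : ℝ) :
    Real.exp x - 1 - x = ∑' n : ℕ, x^(n+2)/(n+2).factorial := by
  have hs := Real.summable_pow_div_factorial x
  have h := hs.sum_add_tsum_nat_add 2
  have hexp : Real.exp x = ∑' n : ℕ, x^n/(n).factorial := by
    rw [Real.exp_eq_exp_ℝ, NormedSpace.exp_eq_tsum_div]
  rw [hexp, ← h, Finset.sum_range_succ, Finset.sum_range_succ]
  simp [Nat.factorial]
  ring

lemma claimA {s x : ℝ} (hs : 0 < s) (hx : |x| ≤ s) :
    (Real.exp x - 1 - x) * s^2 ≤ x^2 * (Real.exp s - 1 - s) := by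
  rcases le_or_gt x 0 with h0 | h0
  · have h1 : Real.exp x - 1 - x ≤ x^2/2 := by nlinarith [exp_le_quad_of_nonpos h0]
    have h2 : s^2/2 ≤ Real.exp s - 1 - s := by nlinarith [quad_le_exp hs.le]
    nlinarith [sq_nonneg x, sq_nonneg s]
  · have hxs : x ≤ s := (abs_le.mp hx).2
    rw [exp_sub_series, exp_sub_series]
    have hsum1 : Summable (fun n : ℕ => x^(n+2)/(n+2).factorial) :=
      (summable_nat_add_iff 2).mpr (Real.summable_pow_div_factorial x)
    have hsum2 : Summable (fun n : ℕ => s^(n+2)/(n+2).factorial) :=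
      (summable_nat_add_iff 2).mpr (Real.summable_pow_div_factorial s)
    rw [← tsum_mul_right, ← tsum_mul_left]
    refine Summable.tsum_le_tsum (fun n => ?_) (hsum1.mul_right _) (hsum2.mul_left _)
    have hpow : x^n ≤ s^n := pow_le_pow_left₀ h0.le hxs n
    have hfac : (0:ℝ) < (n+2).factorial := by positivity
    rw [div_mul_eq_mul_div, mul_comm (x^2), div_mul_eq_mul_div]
    apply div_le_div_of_nonneg_right ?_ hfac.le
    calc x^(n+2) * s^2 = (x^n * x^2) * s^2 := by ring
      _ ≤ (s^n * x^2) * s^2 := by gcongr <;> positivity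
      _ = s^(n+2) * x^2 := by ring

lemma factB {u : ℝ} (hu : 0 ≤ u) : u ≤ (1 + u/2) * Real.log (1+u) := by
  set f : ℝ → ℝ := fun v => (1 + v/2) * Real.log (1+v) - v with hf
  have hderiv : ∀ v ∈ interior (Ici (0:ℝ)), HasDerivAt f
      ((1/2) * Real.log (1+v) + (1 + v/2) * (1/(1+v)) - 1) v := by
    intro v hv
    rw [interior_Ici] at hv
    have hv1 : (0:ℝ) < 1 + v := by simp at hv; linarith
    have h1 : HasDerivAt (fun v : ℝ => 1 + v) 1 v := (hasDerivAt_id v).const_add 1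
    have hlog : HasDerivAt (fun v : ℝ => Real.log (1+v)) (1/(1+v)) v := by
      simpa [one_div] using (h1.log hv1.ne')
    have h2 : HasDerivAt (fun v : ℝ => 1 + v/2) (1/2) v := by
      simpa using ((hasDerivAt_id v).div_const 2).const_add 1
    have := (h2.mul hlog).sub (hasDerivAt_id v)
    exact this
  have hmono : MonotoneOn f (Ici 0) := by
    apply monotoneOn_of_deriv_nonneg (convex_Ici 0)
    · apply ContinuousOn.sub (ContinuousOn.mul (by fun_prop) ?_) continuousOn_id
      apply ContinuousOn.log (by fun_prop)
      intro v hv; simp at hv; intro h; linarith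
    · intro v hv
      exact (hderiv v hv).differentiableAt.differentiableWithinAt
    · intro v hv
      rw [(hderiv v hv).deriv]
      rw [interior_Ici] at hv
      simp only [mem_Ioi] at hv
      have hv1 : (0:ℝ) < 1 + v := by linarith
      have hlb : 1 - (1+v)⁻¹ ≤ Real.log (1+v) := Real.one_sub_inv_le_log_of_pos hv1
      have : (1+v)⁻¹ = 1/(1+v) := (one_div _).symm
      rw [this] at hlb
      have h2 : (1/2) * (1 - 1/(1+v)) + (1 + v/2) * (1/(1+v)) - 1 = 0 := by
        field_simp
        ring
      nlinarith [hlb]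
  have h0 : f 0 = 0 := by simp [hf]
  have := hmono (self_mem_Ici) (mem_Ici.mpr hu) hu
  rw [h0] at this
  simp only [hf] at this
  linarith

lemma mgf_bound {Ω : Type} [MeasurableSpace Ω] (P : Measure Ω) [IsProbabilityMeasure P]
    (W : Ω → ℝ) (hm : Measurable W) (hbdd : ∀ᵐ ω ∂P, |W ω| ≤ 1)
    (hmean : ∫ ω, W ω ∂P = 0) (δ : ℝ) (hδ : 0 < δ) (hvar : ∫ ω, W ω ^ 2 ∂P ≤ δ)
    (c s : ℝ) (hc : |c| ≤ s) (hs : 0 < s) :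
    ∫ ω, Real.exp (c * W ω) ∂P ≤
      Real.exp (c^2 * δ * ((Real.exp s - 1 - s) / s^2)) := by
  set K : ℝ := (Real.exp s - 1 - s) / s^2 with hK
  have hK0 : 0 ≤ K := by
    have h1 : 0 ≤ Real.exp s - 1 - s := by nlinarith [Real.add_one_le_exp s]
    exact div_nonneg h1 (by positivity)
  -- integrability facts
  have hmW : Integrable W P := by
    refine Integrable.mono' (integrable_const 1) hm.aestronglyMeasurable ?_
    filter_upwards [hbdd] with ω h using h
  have hmW2 : Integrable (fun ω => W ω ^ 2) P := by
    refine Integrable.mono' (integrable_const 1) (hm.pow_const 2).aestronglyMeasurable ?_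
    filter_upwards [hbdd] with ω h
    rw [Real.norm_eq_abs, abs_pow]
    calc |W ω| ^ 2 ≤ 1 ^ 2 := by gcongr
      _ = 1 := one_pow 2
  have hiexp : Integrable (fun ω => Real.exp (c * W ω)) P := by
    refine Integrable.mono' (integrable_const (Real.exp |c|)) ((hm.const_mul c).exp).aestronglyMeasurable ?_
    filter_upwards [hbdd] with ω h
    rw [Real.norm_eq_abs, abs_of_nonneg (Real.exp_nonneg _)]
    apply Real.exp_le_exp.mpr
    calc c * W ω ≤ |c * W ω| := le_abs_self _
      _ = |c| * |W ω| := abs_mul _ _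
      _ ≤ |c| * 1 := by gcongr
      _ = |c| := mul_one _
  -- pointwise bound
  have hpt : ∀ᵐ ω ∂P, Real.exp (c * W ω) ≤ 1 + c * W ω + c^2 * K * W ω ^ 2 := by
    filter_upwards [hbdd] with ω h
    have hx : |c * W ω| ≤ s := by
      rw [abs_mul]
      calc |c| * |W ω| ≤ |c| * 1 := by gcongr
        _ ≤ s := by rwa [mul_one]
    have hA := claimA hs hx
    have hs2 : (0:ℝ) < s^2 := by positivity
    have : Real.exp (c * W ω) - 1 - c * W ω ≤ (c * W ω)^2 * K := by
      rw [hK, mul_div_assoc']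
      rw [le_div_iff₀ hs2]
      exact hA
    nlinarith [this]
  have hint : Integrable (fun ω => 1 + c * W ω + c^2 * K * W ω ^ 2) P :=
    ((integrable_const 1).add (hmW.const_mul c)).add (hmW2.const_mul _)
  calc ∫ ω, Real.exp (c * W ω) ∂P ≤ ∫ ω, (1 + c * W ω + c^2 * K * W ω ^ 2) ∂P :=
        integral_mono_ae hiexp hint hpt
    _ = 1 + c * ∫ ω, W ω ∂P + c^2 * K * ∫ ω, W ω ^ 2 ∂P := by
        have i12 : Integrable (fun ω => 1 + c * W ω) P := by
          simpa using (integrable_const (1:ℝ)).add (hmW.const_mul c)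
        rw [integral_add i12 (hmW2.const_mul _),
          integral_add (integrable_const 1) (hmW.const_mul c), integral_const,
          integral_const_mul, integral_const_mul]
        simp
    _ = 1 + c^2 * K * ∫ ω, W ω ^ 2 ∂P := by rw [hmean]; ring
    _ ≤ 1 + c^2 * δ * K := by
        have h1 : c^2 * K * ∫ ω, W ω ^ 2 ∂P ≤ c^2 * K * δ := by
          apply mul_le_mul_of_nonneg_left hvar (by positivity)
        linarith
    _ ≤ Real.exp (c^2 * δ * K) := by
        have := Real.add_one_le_exp (c^2 * δ * K)
        linarith

/-- Talagrand's variant of Bennett's inequality: if `Z₁, …, Zₙ` are i.i.d.,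
`|Z| ≤ 1` a.s., `𝔼Z = 0`, `𝔼Z² ≤ δ`, and `a` is a vector of reals (not all
zero) with sup norm `Ainf` and squared `ℓ²` norm `A2sq`, then for `t > 0` with
`t·Ainf ≥ δ·A2sq`,
`ℙ(∑ aₖ Zₖ ≥ t) ≤ exp(-(t/(2‖a‖∞)) log (t‖a‖∞/(δ‖a‖₂²)))`. -/
theorem stmt_4
    {Ω : Type} [MeasurableSpace Ω] (P : Measure Ω) [IsProbabilityMeasure P]
    (n : ℕ) (Z : Fin n → Ω → ℝ) (δ : ℝ) (hδ : 0 < δ)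
    (hm : ∀ k, Measurable (Z k))
    (hindep : ProbabilityTheory.iIndepFun Z P)
    (hid : ∀ i j, P.map (Z i) = P.map (Z j))
    (hbdd : ∀ k, ∀ᵐ ω ∂P, |Z k ω| ≤ 1)
    (hmean : ∀ k, ∫ ω, Z k ω ∂P = 0)
    (hvar : ∀ k, ∫ ω, (Z k ω) ^ 2 ∂P ≤ δ)
    (a : Fin n → ℝ) (ha : a ≠ 0)
    (Ainf A2sq : ℝ)
    (hAinf : IsGreatest (Set.range fun k => |a k|) Ainf)
    (hA2 : A2sq = ∑ k, (a k) ^ 2) :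
    ∀ t : ℝ, 0 < t → δ * A2sq ≤ t * Ainf →
      P {ω | t ≤ ∑ k, a k * Z k ω} ≤
        ENNReal.ofReal
          (Real.exp (-(t / (2 * Ainf)) * Real.log (t * Ainf / (δ * A2sq)))) := by
  intro t ht htA
  -- basic positivity
  obtain ⟨k0, hk0⟩ : ∃ k, a k ≠ 0 := by
    by_contra h
    push_neg at h
    exact ha (funext fun k => h k)
  have hAinfk : ∀ k, |a k| ≤ Ainf := fun k => hAinf.2 ⟨k, rfl⟩
  have hAinf0 : 0 < Ainf := lt_of_lt_of_le (abs_pos.mpr hk0) (hAinfk k0)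
  have hA2pos : 0 < A2sq := by
    rw [hA2]
    exact Finset.sum_pos' (fun i _ => sq_nonneg _)
      ⟨k0, Finset.mem_univ _, by positivity⟩
  set D := δ * A2sq with hD
  have hDpos : 0 < D := mul_pos hδ hA2pos
  set u := t * Ainf / D with hu
  have hu1 : 1 ≤ u := (one_le_div hDpos).mpr htA
  have hu0 : 0 ≤ u := by linarith
  have huD : u * D = t * Ainf := div_mul_cancel₀ _ hDpos.ne'
  set s := Real.log (1 + u) with hs
  have hs0 : 0 < s := Real.log_pos (by linarith)
  have hexps : Real.exp s = 1 + u := Real.exp_log (by linarith)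
  set lam := s / Ainf with hlam
  have hlam0 : 0 < lam := div_pos hs0 hAinf0
  set K : ℝ := (Real.exp s - 1 - s) / s^2 with hK
  -- the random variables a k * Z k
  set X : Fin n → Ω → ℝ := fun i ω => a i * Z i ω with hX
  have hmX : ∀ i, Measurable (X i) := fun i => (hm i).const_mul (a i)
  have hindepX : iIndepFun X P := by
    have := hindep.comp (fun i (x : ℝ) => a i * x) (fun i => measurable_const_mul (a i))
    exact this
  have hintX : ∀ i, Integrable (fun ω => Real.exp (lam * X i ω)) P := by
    intro i
    refine Integrable.mono' (integrable_const (Real.exp (lam * |a i|)))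
      (((hmX i).const_mul lam).exp).aestronglyMeasurable ?_
    filter_upwards [hbdd i] with ω h
    rw [Real.norm_eq_abs, abs_of_nonneg (Real.exp_nonneg _)]
    apply Real.exp_le_exp.mpr
    calc lam * X i ω ≤ |lam * X i ω| := le_abs_self _
      _ = lam * (|a i| * |Z i ω|) := by
          rw [abs_mul, abs_of_nonneg hlam0.le, hX, abs_mul]
      _ ≤ lam * (|a i| * 1) := by gcongr
      _ = lam * |a i| := by rw [mul_one]
  -- Chernoff
  have hintS : Integrable (fun ω => Real.exp (lam * (∑ i, X i) ω)) P :=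
    hindepX.integrable_exp_mul_sum hmX (fun i _ => hintX i)
  have hch := measure_ge_le_exp_mul_mgf (X := ∑ i, X i) (μ := P) (t := lam) t
    hlam0.le hintS
  -- mgf bound
  have hmgf_sum : mgf (∑ i, X i) P lam = ∏ i, mgf (X i) P lam :=
    hindepX.mgf_sum hmX Finset.univ
  have hmgf_i : ∀ i, mgf (X i) P lam ≤ Real.exp ((lam * a i)^2 * δ * K) := by
    intro i
    have hc : |lam * a i| ≤ s := by
      rw [abs_mul, abs_of_nonneg hlam0.le]
      calc lam * |a i| ≤ lam * Ainf := by gcongr; exact hAinfk i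
        _ = s := by rw [hlam]; field_simp
    have := mgf_bound P (Z i) (hm i) (hbdd i) (hmean i) δ hδ (hvar i) (lam * a i) s hc hs0
    rw [mgf]
    calc ∫ ω, Real.exp (lam * X i ω) ∂P = ∫ ω, Real.exp ((lam * a i) * Z i ω) ∂P := by
          congr 1; funext ω; rw [hX]; ring_nf
      _ ≤ Real.exp ((lam * a i)^2 * δ * K) := this
  have hprod : (∏ i, mgf (X i) P lam) ≤ Real.exp (lam^2 * δ * K * A2sq) := by
    calc (∏ i, mgf (X i) P lam) ≤ ∏ i, Real.exp ((lam * a i)^2 * δ * K) :=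
          Finset.prod_le_prod (fun i _ => mgf_nonneg) (fun i _ => hmgf_i i)
      _ = Real.exp (∑ i, (lam * a i)^2 * δ * K) := by rw [← Real.exp_sum]
      _ = Real.exp (lam^2 * δ * K * A2sq) := by
          congr 1
          rw [hA2, Finset.mul_sum, ← Finset.sum_congr rfl]
          intro i _
          ring
  -- the key exponent inequality
  have hlogu : Real.log u ≤ s := by
    rw [hs]
    exact Real.log_le_log (by linarith) (by linarith)
  have hlogu0 : 0 ≤ Real.log u := Real.log_nonneg hu1
  have hfB : u ≤ (1 + u/2) * s := by rw [hs]; exact factB hu0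
  have key : u - s - s*u + (u/2) * Real.log u ≤ 0 := by
    nlinarith [mul_le_mul_of_nonneg_left hlogu (by linarith : (0:ℝ) ≤ u/2)]
  have hexp_ineq : -lam * t + lam^2 * δ * K * A2sq ≤
      -(t / (2 * Ainf)) * Real.log (t * Ainf / D) := by
    have hlogarg : t * Ainf / D = u := rfl
    rw [hlogarg]
    have hAinfsq : (0:ℝ) < Ainf^2 := by positivity
    rw [← mul_le_mul_iff_of_pos_right hAinfsq]
    have e1 : (-lam * t + lam^2 * δ * K * A2sq) * Ainf^2
        = -(s * t * Ainf) + D * (u - s) := by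
      rw [hlam, hK, hexps, hD]
      field_simp
      ring
    have e2 : (-(t / (2 * Ainf)) * Real.log u) * Ainf^2
        = -(t * Ainf * Real.log u) / 2 := by
      field_simp
    rw [e1, e2]
    nlinarith [key, hDpos, huD]
  -- put everything together
  have hset : {ω | t ≤ ∑ k, a k * Z k ω} = {ω | t ≤ (∑ i, X i) ω} := by
    ext ω
    simp [Finset.sum_apply, hX]
  rw [hset]
  rw [ENNReal.le_ofReal_iff_toReal_le (measure_ne_top P _) (Real.exp_nonneg _)]
  calc (P {ω | t ≤ (∑ i, X i) ω}).toReal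
      ≤ Real.exp (-lam * t) * mgf (∑ i, X i) P lam := hch
    _ ≤ Real.exp (-lam * t) * Real.exp (lam^2 * δ * K * A2sq) := by
        rw [hmgf_sum]
        exact mul_le_mul_of_nonneg_left hprod (Real.exp_nonneg _)
    _ = Real.exp (-lam * t + lam^2 * δ * K * A2sq) := (Real.exp_add _ _).symm
    _ ≤ Real.exp (-(t / (2 * Ainf)) * Real.log (t * Ainf / D)) :=
        Real.exp_le_exp.mpr hexp_ineq
end
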